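/- For the unique solutions (X_λ, Y_λ) of λX_λ + B₁(X_λ,Y_λ) = 0, λY_λ + B₂(X_λ,Y_λ) = 0, one has liminf_{λ→0+} X_λ ≤ 1/√2 and liminf_{λ→0+} Y_λ ≤ −1/√2. -/

import Mathlib

open Real Filter Topology

/-- The 2×2 matrix C(α,β) from the paper. -/
noncomputable def Cmat (a b : ℝ) : Matrix (Fin 2) (Fin 2) ℝ :=
  1 + b • !![-a, -1 + a; -1 + a, -a] + (1 - b) • !![-1 + a, -a; -a, -1 + a]

/-- The running costs L₁, L₂. -/
noncomputable def Lfun (i : Fin 2) (a b : ℝ) : ℝ :=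
  if i = 0 then a * b + 2 * (1 - a) * (1 - b) else -(a * b) - 2 * (1 - a) * (1 - b)

/-- b_i(α,β,u₁,u₂) = c_{i1}(α,β)u₁ + c_{i2}(α,β)u₂ − L_i(α,β). -/
noncomputable def bfun (i : Fin 2) (a b u₁ u₂ : ℝ) : ℝ :=
  Cmat a b i 0 * u₁ + Cmat a b i 1 * u₂ - Lfun i a b

/-- A_i(u₁,u₂) = max_{α∈𝒜} min_{β∈ℬ} b_i(α,β,u₁,u₂). -/
noncomputable def Afun (As Bs : Set ℝ) (i : Fin 2) (u₁ u₂ : ℝ) : ℝ :=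
  sSup ((fun a => sInf ((fun b => bfun i a b u₁ u₂) '' Bs)) '' As)

/-- The set 𝒜 = {2 − √2 + 4^{−k} : k ≥ 1} ∪ {2 − √2}. -/
noncomputable def calA : Set ℝ :=
  {x | ∃ k : ℕ, 1 ≤ k ∧ x = 2 - Real.sqrt 2 + (4 : ℝ) ^ (-(k : ℤ))} ∪ {2 - Real.sqrt 2}

/-- The set ℬ = {0, 1}. -/
def calB : Set ℝ := {0, 1}

/-- B_i(u₁,u₂) = max_{α∈𝒜} min_{β∈ℬ} b_i(α,β,u₁,u₂). -/
noncomputable def Bop (i : Fin 2) (u₁ u₂ : ℝ) : ℝ := Afun calA calB i u₁ u₂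

-- ===== auxiliary development =====
noncomputable def ff1 (a w : ℝ) : ℝ := a * (w + 2) - 2
noncomputable def ff2 (a w : ℝ) : ℝ := (1 - a) * w - a
noncomputable def Pfun (w : ℝ) : ℝ := sSup ((fun a => min (ff1 a w) (ff2 a w)) '' calA)
noncomputable def Qfun (w : ℝ) : ℝ := sInf ((fun a => max (ff1 a w) (ff2 a w)) '' calA)
noncomputable def vc (w : ℝ) : ℝ := (w^2 - 2) / (2*w + 3)

lemma sqrt2_sq : Real.sqrt 2 ^ 2 = 2 := Real.sq_sqrt (by norm_num)
lemma sqrt2_lb : 1.414 ≤ Real.sqrt 2 := by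
  nlinarith [Real.sq_sqrt (show (0:ℝ) ≤ 2 by norm_num), Real.sqrt_nonneg 2]
lemma sqrt2_ub : Real.sqrt 2 ≤ 1.415 := by
  nlinarith [Real.sq_sqrt (show (0:ℝ) ≤ 2 by norm_num), Real.sqrt_nonneg 2]

lemma bfun00 (a u v : ℝ) : bfun 0 a 0 u v = ff1 a (u - v) := by
  simp [bfun, Lfun, Cmat, Matrix.add_apply, Matrix.smul_apply, Matrix.one_apply, ff1]; ring
lemma bfun01 (a u v : ℝ) : bfun 0 a 1 u v = ff2 a (u - v) := by
  simp [bfun, Lfun, Cmat, Matrix.add_apply, Matrix.smul_apply, Matrix.one_apply, ff2]; ring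
lemma bfun10 (a u v : ℝ) : bfun 1 a 0 u v = -ff1 a (u - v) := by
  simp [bfun, Lfun, Cmat, Matrix.add_apply, Matrix.smul_apply, Matrix.one_apply, ff1]; ring
lemma bfun11 (a u v : ℝ) : bfun 1 a 1 u v = -ff2 a (u - v) := by
  simp [bfun, Lfun, Cmat, Matrix.add_apply, Matrix.smul_apply, Matrix.one_apply, ff2]; ring

lemma imageB (g : ℝ → ℝ) : g '' calB = {g 0, g 1} := by
  simp [calB, Set.image_insert_eq]

lemma bop0 (u v : ℝ) : Bop 0 u v = Pfun (u - v) := by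
  unfold Bop Afun Pfun
  congr 1
  apply Set.image_congr
  intro a _
  rw [imageB, bfun00, bfun01, csInf_pair]

lemma bop1 (u v : ℝ) : Bop 1 u v = -(Qfun (u - v)) := by
  unfold Bop Afun Qfun
  rw [Real.sInf_def, neg_neg]
  congr 1
  rw [← Set.image_neg_eq_neg, ← Set.image_comp]
  apply Set.image_congr
  intro a _
  rw [imageB, bfun10, bfun11, csInf_pair]
  simp [min_neg_neg]

lemma astar_mem : (2 - Real.sqrt 2) ∈ calA := Or.inr rfl

lemma apow_mem (k : ℕ) (hk : 1 ≤ k) : (2 - Real.sqrt 2 + (4:ℝ) ^ (-(k:ℤ))) ∈ calA :=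
  Or.inl ⟨k, hk, rfl⟩

lemma calA_bounds {a : ℝ} (ha : a ∈ calA) :
    2 - Real.sqrt 2 ≤ a ∧ a ≤ 2 - Real.sqrt 2 + 1/4 := by
  rcases ha with ⟨k, hk, rfl⟩ | h
  · have h1 : (0:ℝ) < (4:ℝ) ^ (-(k:ℤ)) := zpow_pos (by norm_num) _
    have h2 : (4:ℝ) ^ (-(k:ℤ)) ≤ (4:ℝ) ^ (-(1:ℤ)) := by
      apply zpow_le_zpow_right₀ (by norm_num)
      omega
    have h3 : (4:ℝ) ^ (-(1:ℤ)) = 1/4 := by norm_num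
    rw [h3] at h2
    constructor <;> nlinarith [h1, h2]
  · simp only [Set.mem_singleton_iff] at h
    subst h; norm_num

lemma calA_bounds' {a : ℝ} (ha : a ∈ calA) : 0.58 ≤ a ∧ a ≤ 0.84 := by
  obtain ⟨h1, h2⟩ := calA_bounds ha
  constructor <;> nlinarith [sqrt2_lb, sqrt2_ub]

lemma Pne (w : ℝ) : ((fun a => min (ff1 a w) (ff2 a w)) '' calA).Nonempty :=
  ⟨_, Set.mem_image_of_mem _ astar_mem⟩
lemma Qne (w : ℝ) : ((fun a => max (ff1 a w) (ff2 a w)) '' calA).Nonempty :=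
  ⟨_, Set.mem_image_of_mem _ astar_mem⟩

lemma ff1_bounds {a : ℝ} (ha : a ∈ calA) (w : ℝ) :
    -(|w| + 4) ≤ ff1 a w ∧ ff1 a w ≤ |w| + 2 := by
  obtain ⟨h1, h2⟩ := calA_bounds' ha
  have := abs_nonneg w
  have h3 := neg_abs_le w; have h4 := le_abs_self w
  unfold ff1
  constructor <;> nlinarith

lemma Pbdd (w : ℝ) : BddAbove ((fun a => min (ff1 a w) (ff2 a w)) '' calA) := by
  refine ⟨|w| + 2, ?_⟩
  rintro x ⟨a, ha, rfl⟩
  exact le_trans (min_le_left _ _) (ff1_bounds ha w).2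

lemma Qbdd (w : ℝ) : BddBelow ((fun a => max (ff1 a w) (ff2 a w)) '' calA) := by
  refine ⟨-(|w| + 4), ?_⟩
  rintro x ⟨a, ha, rfl⟩
  exact le_trans (ff1_bounds ha w).1 (le_max_left _ _)

lemma Pmono : Monotone Pfun := by
  intro w1 w2 hw
  apply csSup_le (Pne w1)
  rintro x ⟨a, ha, rfl⟩
  obtain ⟨h1, h2⟩ := calA_bounds' ha
  have e1 : ff1 a w1 ≤ ff1 a w2 := by unfold ff1; nlinarith
  have e2 : ff2 a w1 ≤ ff2 a w2 := by unfold ff2; nlinarith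
  exact le_trans (min_le_min e1 e2) (le_csSup (Pbdd w2) (Set.mem_image_of_mem _ ha))

lemma Qmono : Monotone Qfun := by
  intro w1 w2 hw
  apply le_csInf (Qne w2)
  rintro x ⟨a, ha, rfl⟩
  obtain ⟨h1, h2⟩ := calA_bounds' ha
  have e1 : ff1 a w1 ≤ ff1 a w2 := by unfold ff1; nlinarith
  have e2 : ff2 a w1 ≤ ff2 a w2 := by unfold ff2; nlinarith
  exact le_trans (csInf_le (Qbdd w1) (Set.mem_image_of_mem _ ha)) (max_le_max e1 e2)

lemma combo (a w : ℝ) (hw : -1 < w) :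
    (w+1)/(2*w+3) * ff1 a w + (1 - (w+1)/(2*w+3)) * ff2 a w = vc w := by
  have h : (2*w+3) ≠ 0 := by nlinarith
  unfold ff1 ff2 vc
  have hi : (2*w+3) * (2*w+3)⁻¹ = 1 := mul_inv_cancel₀ h
  rw [div_eq_mul_inv, div_eq_mul_inv]
  linear_combination (a*w + a - w) * hi

lemma min_le_vc (a w : ℝ) (hw : -1 < w) : min (ff1 a w) (ff2 a w) ≤ vc w := by
  have hx1 : 0 ≤ (w+1)/(2*w+3) := div_nonneg (by linarith) (by linarith)
  have hx2 : (w+1)/(2*w+3) ≤ 1 := by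
    rw [div_le_one (by nlinarith)]; nlinarith
  have h := combo a w hw
  have m1 : min (ff1 a w) (ff2 a w) ≤ ff1 a w := min_le_left _ _
  have m2 : min (ff1 a w) (ff2 a w) ≤ ff2 a w := min_le_right _ _
  nlinarith [m1, m2]

lemma vc_le_max (a w : ℝ) (hw : -1 < w) : vc w ≤ max (ff1 a w) (ff2 a w) := by
  have hx1 : 0 ≤ (w+1)/(2*w+3) := div_nonneg (by linarith) (by linarith)
  have hx2 : (w+1)/(2*w+3) ≤ 1 := by
    rw [div_le_one (by nlinarith)]; nlinarith
  have h := combo a w hw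
  have m1 : ff1 a w ≤ max (ff1 a w) (ff2 a w) := le_max_left _ _
  have m2 : ff2 a w ≤ max (ff1 a w) (ff2 a w) := le_max_right _ _
  nlinarith [m1, m2]

lemma P_le_vc (w : ℝ) (hw : -1 < w) : Pfun w ≤ vc w := by
  apply csSup_le (Pne w); rintro x ⟨a, ha, rfl⟩; exact min_le_vc a w hw

lemma vc_le_Q (w : ℝ) (hw : -1 < w) : vc w ≤ Qfun w := by
  apply le_csInf (Qne w); rintro x ⟨a, ha, rfl⟩; exact vc_le_max a w hw

lemma mstar_le_P (w : ℝ) :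
    min (ff1 (2 - Real.sqrt 2) w) (ff2 (2 - Real.sqrt 2) w) ≤ Pfun w :=
  le_csSup (Pbdd w) (Set.mem_image_of_mem _ astar_mem)

lemma Q_le_Mstar (w : ℝ) :
    Qfun w ≤ max (ff1 (2 - Real.sqrt 2) w) (ff2 (2 - Real.sqrt 2) w) :=
  csInf_le (Qbdd w) (Set.mem_image_of_mem _ astar_mem)

lemma root_unique {lam w1 w2 : ℝ} (hlam : 0 < lam)
    (h1 : lam * w1 + Pfun w1 + Qfun w1 = 0)
    (h2 : lam * w2 + Pfun w2 + Qfun w2 = 0) : w1 = w2 := by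
  rcases lt_trichotomy w1 w2 with h | h | h
  · have p := Pmono h.le; have q := Qmono h.le
    nlinarith
  · exact h
  · have p := Pmono h.le; have q := Qmono h.le
    nlinarith

lemma ff1_astar (w : ℝ) : ff1 (2 - Real.sqrt 2) w = (2 - Real.sqrt 2) * (w - Real.sqrt 2) := by
  have := sqrt2_sq; unfold ff1; nlinarith [this]
lemma ff2_astar (w : ℝ) : ff2 (2 - Real.sqrt 2) w = (Real.sqrt 2 - 1) * (w - Real.sqrt 2) := by
  have := sqrt2_sq; unfold ff2; nlinarith [this]

lemma w_pos {lam w : ℝ} (hlam : 0 < lam)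
    (heq : lam * w + Pfun w + Qfun w = 0) : 0 < w := by
  by_contra hw0
  push_neg at hw0
  have s1 := sqrt2_lb; have s2 := sqrt2_ub
  have hQ := Q_le_Mstar w
  rw [ff1_astar, ff2_astar] at hQ
  have hQ' : Qfun w ≤ -0.5 := by
    refine le_trans hQ (max_le ?_ ?_) <;> nlinarith
  rcases le_or_gt w (-1) with hcase | hcase
  · have hP : Pfun w ≤ -1 := by
      apply csSup_le (Pne w)
      rintro x ⟨a, ha, rfl⟩
      obtain ⟨ha1, ha2⟩ := calA_bounds' ha
      refine le_trans (min_le_right _ _) ?_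
      unfold ff2; nlinarith
    nlinarith
  · have hP : Pfun w ≤ vc w := P_le_vc w hcase
    have hvc : vc w ≤ -1/3 := by
      unfold vc
      rw [div_le_iff₀ (by linarith)]
      nlinarith
    nlinarith

lemma w_lt_sqrt2 {lam w : ℝ} (hlam : 0 < lam)
    (heq : lam * w + Pfun w + Qfun w = 0) : w < Real.sqrt 2 := by
  by_contra hw
  push_neg at hw
  have s1 := sqrt2_lb; have s2 := sqrt2_ub; have s3 := sqrt2_sq
  have hP := mstar_le_P w
  rw [ff1_astar, ff2_astar] at hP
  have hP' : (0:ℝ) ≤ Pfun w := by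
    refine le_trans ?_ hP
    rw [le_min_iff]
    constructor <;> nlinarith
  have hQ : vc w ≤ Qfun w := vc_le_Q w (by nlinarith)
  have hvc : (0:ℝ) ≤ vc w := div_nonneg (by nlinarith) (by nlinarith)
  have hw0 : 0 < w := by nlinarith
  nlinarith

lemma w_close {lam w : ℝ} (hlam : 0 < lam)
    (heq : lam * w + Pfun w + Qfun w = 0) : Real.sqrt 2 - w ≤ 4 * lam := by
  have hw0 := w_pos hlam heq
  have hw2 := w_lt_sqrt2 hlam heq
  have s1 := sqrt2_lb; have s2 := sqrt2_ub; have s3 := sqrt2_sq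
  have hP : Pfun w ≤ vc w := P_le_vc w (by linarith)
  have hQ := Q_le_Mstar w
  rw [ff1_astar, ff2_astar] at hQ
  have hQ' : Qfun w ≤ (Real.sqrt 2 - 1) * (w - Real.sqrt 2) := by
    refine le_trans hQ (max_le ?_ le_rfl)
    nlinarith
  have hvc : vc w ≤ 0 := by
    apply div_nonpos_of_nonpos_of_nonneg <;> nlinarith
  nlinarith

lemma Y_lb {lam w Ylam : ℝ} (hlam : 0 < lam)
    (heq : lam * w + Pfun w + Qfun w = 0)
    (hy : lam * Ylam = Qfun w) : -4 ≤ Ylam := by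
  have hw0 := w_pos hlam heq
  have hw2 := w_lt_sqrt2 hlam heq
  have hcl := w_close hlam heq
  have s1 := sqrt2_lb; have s2 := sqrt2_ub; have s3 := sqrt2_sq
  have hQ : vc w ≤ Qfun w := vc_le_Q w (by linarith)
  have hvc : -(Real.sqrt 2 - w) ≤ vc w := by
    unfold vc
    rw [le_div_iff₀ (by linarith)]
    nlinarith
  have : -(4*lam) ≤ lam * Ylam := by nlinarith
  nlinarith

-- ===== special parameters =====

lemma epos (k : ℕ) : (0:ℝ) < (4:ℝ) ^ (-(k:ℤ)) := zpow_pos (by norm_num) _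

lemma esmall {k : ℕ} (hk : 4 ≤ k) : (4:ℝ) ^ (-(k:ℤ)) ≤ 1/256 := by
  have h : (4:ℝ) ^ (-(k:ℤ)) ≤ (4:ℝ) ^ (-(4:ℤ)) := by
    apply zpow_le_zpow_right₀ (by norm_num); omega
  have h4 : (4:ℝ) ^ (-(4:ℤ)) = 1/256 := by norm_num
  rw [h4] at h; exact h

noncomputable def wk (e : ℝ) : ℝ := (3*Real.sqrt 2 - 4 - 3*e)/(3 - 2*Real.sqrt 2 + 2*e)

lemma wk_facts {e : ℝ} (he : 0 < e) (he2 : e ≤ 1/256) :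
    wk e < Real.sqrt 2 ∧ Real.sqrt 2 - wk e ≤ 35*e ∧ 1.2 ≤ wk e := by
  have s1 := sqrt2_lb; have s2 := sqrt2_ub; have s3 := sqrt2_sq
  have hd : (0:ℝ) < 3 - 2*Real.sqrt 2 + 2*e := by nlinarith
  have h1 : wk e < Real.sqrt 2 := by
    rw [wk, div_lt_iff₀ hd]; nlinarith
  have h2 : Real.sqrt 2 - 35*e ≤ wk e := by
    rw [wk, le_div_iff₀ hd]; nlinarith
  exact ⟨h1, by linarith, by nlinarith⟩

lemma crossing {e : ℝ} (he : 0 < e) (he2 : e ≤ 1/256) :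
    ff1 (2 - Real.sqrt 2 + e) (wk e) = ff2 (2 - Real.sqrt 2 + e) (wk e) := by
  have s1 := sqrt2_lb; have s2 := sqrt2_ub; have s3 := sqrt2_sq
  have hd : (0:ℝ) < 3 - 2*Real.sqrt 2 + 2*e := by nlinarith
  have hwk : (3 - 2*Real.sqrt 2 + 2*e) * wk e = 3*Real.sqrt 2 - 4 - 3*e := by
    rw [wk, mul_div_cancel₀]; exact ne_of_gt hd
  unfold ff1 ff2; nlinarith [hwk]

lemma vk_eq_vc {e : ℝ} (he : 0 < e) (he2 : e ≤ 1/256) :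
    ff1 (2 - Real.sqrt 2 + e) (wk e) = vc (wk e) := by
  obtain ⟨h1, h2, h3⟩ := wk_facts he he2
  have hcross := crossing he he2
  have hc := combo (2 - Real.sqrt 2 + e) (wk e) (by linarith)
  rw [← hcross] at hc
  nlinarith [hc]

lemma PQ_at_wk {e : ℝ} (k : ℕ) (hk : 1 ≤ k) (hke : e = (4:ℝ) ^ (-(k:ℤ)))
    (he : 0 < e) (he2 : e ≤ 1/256) :
    Pfun (wk e) = vc (wk e) ∧ Qfun (wk e) = vc (wk e) := by
  obtain ⟨h1, h2, h3⟩ := wk_facts he he2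
  have hcross := crossing he he2
  have hvk := vk_eq_vc he he2
  have hmem : (2 - Real.sqrt 2 + e) ∈ calA := by rw [hke]; exact apow_mem k hk
  constructor
  · apply le_antisymm (P_le_vc _ (by linarith))
    calc vc (wk e) = min (ff1 (2 - Real.sqrt 2 + e) (wk e)) (ff2 (2 - Real.sqrt 2 + e) (wk e)) := by
          rw [← hcross, min_self, hvk]
      _ ≤ Pfun (wk e) := le_csSup (Pbdd _) (Set.mem_image_of_mem _ hmem)
  · apply le_antisymm _ (vc_le_Q _ (by linarith))
    calc Qfun (wk e) ≤ max (ff1 (2 - Real.sqrt 2 + e) (wk e)) (ff2 (2 - Real.sqrt 2 + e) (wk e)) :=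
          csInf_le (Qbdd _) (Set.mem_image_of_mem _ hmem)
      _ = vc (wk e) := by rw [← hcross, max_self, hvk]

lemma vc_wk_neg {e : ℝ} (he : 0 < e) (he2 : e ≤ 1/256) : vc (wk e) < 0 := by
  obtain ⟨h1, h2, h3⟩ := wk_facts he he2
  have s1 := sqrt2_lb; have s2 := sqrt2_ub; have s3 := sqrt2_sq
  apply div_neg_of_neg_of_pos <;> nlinarith

lemma lamk_facts {e : ℝ} (he : 0 < e) (he2 : e ≤ 1/256) :
    0 < -2 * vc (wk e) / wk e ∧ -2 * vc (wk e) / wk e ≤ 64 * e := by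
  obtain ⟨h1, h2, h3⟩ := wk_facts he he2
  have s1 := sqrt2_lb; have s2 := sqrt2_ub; have s3 := sqrt2_sq
  have hneg := vc_wk_neg he he2
  have hwpos : (0:ℝ) < wk e := by linarith
  constructor
  · apply div_pos (by linarith) hwpos
  · rw [div_le_iff₀ hwpos]
    have hvlb : -(Real.sqrt 2 - wk e) ≤ vc (wk e) := by
      unfold vc
      rw [le_div_iff₀ (by linarith)]
      nlinarith
    nlinarith

lemma econv (k : ℕ) : (4:ℝ) ^ (-(k:ℤ)) = (1/4:ℝ)^k := by
  rw [zpow_neg, zpow_natCast, ← inv_pow, one_div]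
theorem liminf_bounds (X Y : ℝ → ℝ)
    (hsol : ∀ lam : ℝ, 0 < lam →
      lam * X lam + Bop 0 (X lam) (Y lam) = 0 ∧
      lam * Y lam + Bop 1 (X lam) (Y lam) = 0) :
    Filter.liminf X (𝓝[>] (0 : ℝ)) ≤ 1 / Real.sqrt 2 ∧
    Filter.liminf Y (𝓝[>] (0 : ℝ)) ≤ -(1 / Real.sqrt 2) := by
  have key : ∀ lam : ℝ, 0 < lam →
      lam * X lam + Pfun (X lam - Y lam) = 0 ∧ lam * Y lam = Qfun (X lam - Y lam) ∧
      lam * (X lam - Y lam) + Pfun (X lam - Y lam) + Qfun (X lam - Y lam) = 0 := by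
    intro lam hl
    obtain ⟨h1, h2⟩ := hsol lam hl
    rw [bop0] at h1
    rw [bop1] at h2
    have h3 : lam * (X lam - Y lam) = lam * X lam - lam * Y lam := by ring
    exact ⟨h1, by linarith, by linarith⟩
  have hYlb : ∀ᶠ lam in 𝓝[>](0:ℝ), -4 ≤ Y lam := by
    filter_upwards [self_mem_nhdsWithin] with lam hl
    obtain ⟨h1, h2, h3⟩ := key lam hl
    exact Y_lb hl h3 h2
  have hsqrt2half : 1 / Real.sqrt 2 = Real.sqrt 2 / 2 := by
    have h0 : Real.sqrt 2 ≠ 0 := by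
      have := sqrt2_lb; intro h; rw [h] at this; norm_num at this
    have hmul : Real.sqrt 2 * Real.sqrt 2 = 2 := by nlinarith [sqrt2_sq]
    field_simp
    try linarith [hmul]
  have hspec : ∀ k : ℕ, 4 ≤ k → ∃ lam : ℝ, 0 < lam ∧ lam ≤ 64 * (4:ℝ)^(-(k:ℤ)) ∧
      X lam ≤ 1 / Real.sqrt 2 ∧ Y lam ≤ -(1 / Real.sqrt 2) + 18 * (4:ℝ)^(-(k:ℤ)) := by
    intro k hk
    set e := (4:ℝ)^(-(k:ℤ)) with hke
    have he : 0 < e := epos k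
    have he2 : e ≤ 1/256 := esmall hk
    obtain ⟨hw1, hw2, hw3⟩ := wk_facts he he2
    obtain ⟨hP, hQ⟩ := PQ_at_wk k (by omega) hke he he2
    obtain ⟨hl1, hl2⟩ := lamk_facts he he2
    set lam := -2 * vc (wk e) / wk e with hlam
    refine ⟨lam, hl1, hl2, ?_, ?_⟩ <;>
    · obtain ⟨h1, h2, h3⟩ := key lam hl1
      have hwpos : 0 < wk e := by linarith
      have hvneg := vc_wk_neg he he2
      have heqk : lam * wk e + Pfun (wk e) + Qfun (wk e) = 0 := by
        rw [hP, hQ, hlam, div_mul_cancel₀ _ (ne_of_gt hwpos)]; ring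
      have hweq : X lam - Y lam = wk e := root_unique hl1 h3 heqk
      rw [hweq] at h1 h2
      rw [hP] at h1
      rw [hQ] at h2
      have hlam_ne : lam ≠ 0 := ne_of_gt hl1
      have hX : X lam = wk e / 2 := by
        have hv1 : lam * (wk e / 2) = -(vc (wk e)) := by
          rw [hlam]; field_simp; try ring
        apply mul_left_cancel₀ hlam_ne
        rw [hv1]; linarith
      have hY : Y lam = -(wk e / 2) := by
        have hv1 : lam * (-(wk e / 2)) = vc (wk e) := by
          rw [hlam]; field_simp; try ring
        apply mul_left_cancel₀ hlam_ne
        rw [hv1]; linarith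
      first
        | (rw [hX, hsqrt2half]; linarith)
        | (rw [hY, hsqrt2half]; linarith)
  have hchoose : ∀ c : ℝ, 0 < c → ∃ k : ℕ, 4 ≤ k ∧ (4:ℝ)^(-(k:ℤ)) < c := by
    intro c hc
    obtain ⟨n, hn⟩ := exists_pow_lt_of_lt_one hc (show (1/4:ℝ) < 1 by norm_num)
    refine ⟨n + 4, by omega, ?_⟩
    rw [econv]
    calc (1/4:ℝ)^(n+4) ≤ (1/4:ℝ)^n :=
          pow_le_pow_of_le_one (by norm_num) (by norm_num) (by omega)
      _ < c := hn
  constructor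
  · rw [Filter.liminf_eq]
    apply Real.sSup_le _ (by positivity)
    intro x hx
    simp only [Set.mem_setOf_eq] at hx
    rw [Filter.eventually_iff, mem_nhdsGT_iff_exists_Ioo_subset] at hx
    obtain ⟨u, hu, hsub⟩ := hx
    have hu0 : (0:ℝ) < u := Set.mem_Ioi.mp hu
    obtain ⟨k, hk4, hkc⟩ := hchoose (u/64) (by positivity)
    obtain ⟨lam, hl0, hlu, hXb, hYb⟩ := hspec k hk4
    have hmem : lam ∈ Set.Ioo 0 u := ⟨hl0, by linarith⟩
    exact le_trans (hsub hmem) hXb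
  · rw [Filter.liminf_eq]
    refine csSup_le ⟨-4, hYlb⟩ ?_
    intro x hx
    simp only [Set.mem_setOf_eq] at hx
    rw [Filter.eventually_iff, mem_nhdsGT_iff_exists_Ioo_subset] at hx
    obtain ⟨u, hu, hsub⟩ := hx
    have hu0 : (0:ℝ) < u := Set.mem_Ioi.mp hu
    have hepsbound : ∀ ε : ℝ, 0 < ε → x ≤ -(1 / Real.sqrt 2) + ε := by
      intro ε heps
      obtain ⟨k, hk4, hkc⟩ := hchoose (min (u/64) (ε/18)) (by positivity)
      obtain ⟨lam, hl0, hlu, hXb, hYb⟩ := hspec k hk4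
      have h1 : (4:ℝ)^(-(k:ℤ)) < u/64 := lt_of_lt_of_le hkc (min_le_left _ _)
      have h2 : (4:ℝ)^(-(k:ℤ)) < ε/18 := lt_of_lt_of_le hkc (min_le_right _ _)
      have hmem : lam ∈ Set.Ioo 0 u := ⟨hl0, by linarith⟩
      have hxY := hsub hmem
      simp only [Set.mem_setOf_eq] at hxY
      linarith
    exact le_of_forall_pos_le_add hepsbound
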